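/- Let D: ℤ² → {0, P, N} be a Newton diagram with maximal support K = {(a,b) ∈ ℕ₀² : a+b < d} (d ≥ 1). Then D has at least (d+5)/2 nodes. -/

import Mathlib

/-- A point `(a,b)` (encoding the monomial `X₁^a X₂^b X₀^{d-a-b}` of degree `d`)
is a node of the diagram `D`: the three values `D(a,b), D(a-1,b), D(a,b-1)` are
not all zero and do not contain both a positive and a negative value (i.e. the
value set is `{P}`, `{N}`, `{0,P}`, or `{0,N}`). -/
def IsNode (D : ℤ × ℤ → ℤ) (a b : ℕ) : Prop :=
  ((0 ≤ D ((a : ℤ), (b : ℤ)) ∧ 0 ≤ D ((a : ℤ) - 1, (b : ℤ)) ∧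
      0 ≤ D ((a : ℤ), (b : ℤ) - 1)) ∨
   (D ((a : ℤ), (b : ℤ)) ≤ 0 ∧ D ((a : ℤ) - 1, (b : ℤ)) ≤ 0 ∧
      D ((a : ℤ), (b : ℤ) - 1) ≤ 0)) ∧
  (D ((a : ℤ), (b : ℤ)) ≠ 0 ∨ D ((a : ℤ) - 1, (b : ℤ)) ≠ 0 ∨
      D ((a : ℤ), (b : ℤ) - 1) ≠ 0)

instance (D : ℤ × ℤ → ℤ) (a b : ℕ) : Decidable (IsNode D a b) := by
  unfold IsNode; infer_instance



/-- value of the diagram at a nonnegative lattice point -/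
def gD (D : ℤ × ℤ → ℤ) (a b : ℕ) : ℤ := D ((a : ℤ), (b : ℤ))

/-- horizontal edge (x,y)-(x+1,y) is mixed -/
def edH (D : ℤ × ℤ → ℤ) (x y : ℕ) : ℕ := if gD D x y * gD D (x+1) y = -1 then 1 else 0
/-- vertical edge (x,y)-(x,y+1) is mixed -/
def edV (D : ℤ × ℤ → ℤ) (x y : ℕ) : ℕ := if gD D x y * gD D x (y+1) = -1 then 1 else 0
/-- diagonal edge (x+1,y)-(x,y+1) is mixed -/
def edDg (D : ℤ × ℤ → ℤ) (x y : ℕ) : ℕ := if gD D (x+1) y * gD D x (y+1) = -1 then 1 else 0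



lemma tri_core (u v w : ℤ) (hu : u = 0 ∨ u = 1 ∨ u = -1) (hv : v = 0 ∨ v = 1 ∨ v = -1)
    (hw : w = 0 ∨ w = 1 ∨ w = -1) :
    (if u * v = -1 then (1:ℕ) else 0) + (if u * w = -1 then 1 else 0) +
      (if v * w = -1 then 1 else 0) ≤ 2 := by
  rcases hu with rfl|rfl|rfl <;> rcases hv with rfl|rfl|rfl <;>
    rcases hw with rfl|rfl|rfl <;> decide

lemma inner_core (u v w : ℤ) (hu : u = 1 ∨ u = -1) (hv : v = 1 ∨ v = -1)
    (hw : w = 1 ∨ w = -1)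
    (h : ¬ ((0 ≤ u ∧ 0 ≤ v ∧ 0 ≤ w) ∨ (u ≤ 0 ∧ v ≤ 0 ∧ w ≤ 0))) :
    2 ≤ (if v * u = -1 then (1:ℕ) else 0) + (if w * u = -1 then 1 else 0) +
      (if w * v = -1 then 1 else 0) := by
  rcases hu with rfl|rfl <;> rcases hv with rfl|rfl <;> rcases hw with rfl|rfl <;>
    revert h <;> decide

lemma sum_ind_lt (n k : ℕ) : (∑ b ∈ Finset.range n, if b < k then (1:ℕ) else 0) = min k n := by
  induction n with
  | zero => simp
  | succ n ih => rw [Finset.sum_range_succ, ih]; split <;> omega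

lemma gauss (k : ℕ) : (∑ a ∈ Finset.range k, (k - a)) * 2 = k * (k + 1) := by
  have h1 : ∑ a ∈ Finset.range k, (k - a) = ∑ a ∈ Finset.range k, ((k - 1 - a) + 1) :=
    Finset.sum_congr rfl fun a ha => by have := Finset.mem_range.mp ha; omega
  rw [h1, Finset.sum_range_reflect (fun j => j + 1) k]
  have h2 := Finset.sum_range_succ' (fun i => i) k
  simp only [add_zero] at h2
  rw [← h2, Finset.sum_range_id_mul_two (k + 1)]
  simp [Nat.mul_comm]

lemma tri_count (n k : ℕ) (h : k ≤ n) :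
    (∑ a ∈ Finset.range n, ∑ b ∈ Finset.range n, if a + b < k then (1:ℕ) else 0) * 2
      = k * (k + 1) := by
  have h1 : ∀ a, (∑ b ∈ Finset.range n, if a + b < k then (1:ℕ) else 0) = min (k - a) n := by
    intro a
    rw [← sum_ind_lt n (k - a)]
    exact Finset.sum_congr rfl fun b _ => if_congr (by omega) rfl rfl
  rw [Finset.sum_congr rfl fun a _ => h1 a]
  have h2 : ∀ a ∈ Finset.range n, min (k - a) n = k - a := fun a ha => by
    have := Finset.mem_range.mp ha; omega
  rw [Finset.sum_congr rfl h2]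
  have h3 : ∑ a ∈ Finset.range n, (k - a) = ∑ a ∈ Finset.range k, (k - a) :=
    (Finset.sum_subset (Finset.range_subset_range.mpr h) (fun a _ ha => by
      have : ¬ a < k := fun hh => ha (Finset.mem_range.mpr hh); omega)).symm
  rw [h3, gauss]

/-- The DKR lemma: a two-variable Newton diagram `D` (values in `{0,+1,-1}`)
with maximal support `K = {(a,b) ∈ ℕ₀² : a + b < d}` has at least `(d+5)/2`
nodes, i.e. `d + 5 ≤ 2 ⋅ #(D)`. -/
theorem stmt_18 (d : ℕ) (hd : 1 ≤ d) (D : ℤ × ℤ → ℤ)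
    (hval : ∀ m, D m = 0 ∨ D m = 1 ∨ D m = -1)
    (hsupp : ∀ m : ℤ × ℤ, D m ≠ 0 ↔ (0 ≤ m.1 ∧ 0 ≤ m.2 ∧ m.1 + m.2 < (d : ℤ))) :
    d + 5 ≤ 2 * (((Finset.range (d + 1) ×ˢ Finset.range (d + 1)).filter
      (fun ab => ab.1 + ab.2 ≤ d ∧ IsNode D ab.1 ab.2)).card) := by
  obtain ⟨m, rfl⟩ : ∃ m, d = m + 1 := ⟨d - 1, by omega⟩
  have hz1 : ∀ x : ℤ, D (x, -1) = 0 := by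
    intro x; by_contra h
    obtain ⟨-, h2, -⟩ := (hsupp _).mp h
    norm_num at h2
  have hz2 : ∀ y : ℤ, D (-1, y) = 0 := by
    intro y; by_contra h
    obtain ⟨h1, -, -⟩ := (hsupp _).mp h
    norm_num at h1
  have hnz : ∀ a b : ℕ, a + b ≤ m → gD D a b ≠ 0 := by
    intro a b h
    apply (hsupp _).mpr
    refine ⟨by positivity, by positivity, ?_⟩
    push_cast; omega
  have htop : ∀ a b : ℕ, m + 1 ≤ a + b → gD D a b = 0 := by
    intro a b h; by_contra hc
    obtain ⟨-, -, h3⟩ := (hsupp _).mp hc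
    push_cast at h3; omega
  have hval' : ∀ a b : ℕ, gD D a b = 0 ∨ gD D a b = 1 ∨ gD D a b = -1 := fun a b => hval _
  have hcast : ∀ x : ℕ, ((x + 1 : ℕ) : ℤ) - 1 = ((x : ℕ) : ℤ) := by intro x; push_cast; ring
  have node11 : ∀ x y : ℕ, IsNode D (x+1) (y+1) ↔
      (((0 ≤ gD D (x+1) (y+1) ∧ 0 ≤ gD D x (y+1) ∧ 0 ≤ gD D (x+1) y) ∨
        (gD D (x+1) (y+1) ≤ 0 ∧ gD D x (y+1) ≤ 0 ∧ gD D (x+1) y ≤ 0)) ∧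
       (gD D (x+1) (y+1) ≠ 0 ∨ gD D x (y+1) ≠ 0 ∨ gD D (x+1) y ≠ 0)) := by
    intro x y; unfold IsNode gD; rw [hcast x, hcast y]
  have node10 : ∀ x : ℕ, IsNode D (x+1) 0 ↔
      (((0 ≤ gD D (x+1) 0 ∧ 0 ≤ gD D x 0 ∧ 0 ≤ D ((x+1 : ℕ), -1)) ∨
        (gD D (x+1) 0 ≤ 0 ∧ gD D x 0 ≤ 0 ∧ D ((x+1 : ℕ), -1) ≤ 0)) ∧
       (gD D (x+1) 0 ≠ 0 ∨ gD D x 0 ≠ 0 ∨ D ((x+1 : ℕ), -1) ≠ 0)) := by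
    intro x; unfold IsNode gD; rw [hcast x]; norm_num
  have node01 : ∀ y : ℕ, IsNode D 0 (y+1) ↔
      (((0 ≤ gD D 0 (y+1) ∧ 0 ≤ D (-1, (y+1 : ℕ)) ∧ 0 ≤ gD D 0 y) ∨
        (gD D 0 (y+1) ≤ 0 ∧ D (-1, (y+1 : ℕ)) ≤ 0 ∧ gD D 0 y ≤ 0)) ∧
       (gD D 0 (y+1) ≠ 0 ∨ D (-1, (y+1 : ℕ)) ≠ 0 ∨ gD D 0 y ≠ 0)) := by
    intro y; unfold IsNode gD; rw [hcast y]; norm_num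
  have corner00 : IsNode D 0 0 := by
    unfold IsNode
    have h0 : gD D 0 0 ≠ 0 := hnz 0 0 (by omega)
    unfold gD at h0
    norm_num at h0 ⊢
    rw [hz1 0, hz2 0]
    rcases hval (0, 0) with h|h|h
    · exact absurd h h0
    · rw [h]; norm_num
    · rw [h]; norm_num
  have cornerR : IsNode D (m+1) 0 := by
    rw [node10 m]
    have h0 : gD D (m+1) 0 = 0 := htop (m+1) 0 (by omega)
    have h1 : gD D m 0 ≠ 0 := hnz m 0 (by omega)
    rw [h0, hz1]
    rcases hval' m 0 with h|h|h <;> simp [h] at h1 ⊢ <;> omega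
  have cornerT : IsNode D 0 (m+1) := by
    rw [node01 m]
    have h0 : gD D 0 (m+1) = 0 := htop 0 (m+1) (by omega)
    have h1 : gD D 0 m ≠ 0 := hnz 0 m (by omega)
    rw [h0, hz2]
    rcases hval' 0 m with h|h|h <;> simp [h] at h1 ⊢ <;> omega
  have nodeBottom : ∀ x : ℕ, x + 2 ≤ m + 1 → ¬ IsNode D (x+1) 0 → edH D x 0 = 1 := by
    intro x hx h
    rw [node10 x, hz1] at h
    have h1 : gD D (x+1) 0 ≠ 0 := hnz (x+1) 0 (by omega)
    unfold edH
    rcases hval' x 0 with h2|h2|h2 <;> rcases hval' (x+1) 0 with h3|h3|h3 <;>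
      simp [h2, h3] at h h1 ⊢ <;> omega
  have nodeLeft : ∀ y : ℕ, y + 2 ≤ m + 1 → ¬ IsNode D 0 (y+1) → edV D 0 y = 1 := by
    intro y hy h
    rw [node01 y, hz2] at h
    have h1 : gD D 0 (y+1) ≠ 0 := hnz 0 (y+1) (by omega)
    unfold edV
    rcases hval' 0 y with h2|h2|h2 <;> rcases hval' 0 (y+1) with h3|h3|h3 <;>
      simp [h2, h3] at h h1 ⊢ <;> omega
  have nodeTop : ∀ x y : ℕ, x + y + 2 = m + 1 → ¬ IsNode D (x+1) (y+1) → edDg D x y = 1 := by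
    intro x y hxy h
    rw [node11 x y] at h
    have h0 : gD D (x+1) (y+1) = 0 := htop (x+1) (y+1) (by omega)
    have h1 : gD D x (y+1) ≠ 0 := hnz x (y+1) (by omega)
    have h2 : gD D (x+1) y ≠ 0 := hnz (x+1) y (by omega)
    rw [h0] at h
    unfold edDg
    rcases hval' x (y+1) with h3|h3|h3 <;> rcases hval' (x+1) y with h4|h4|h4 <;>
      simp [h3, h4] at h h1 h2 ⊢ <;> omega
  have nodeInner : ∀ x y : ℕ, x + y + 3 ≤ m + 1 → ¬ IsNode D (x+1) (y+1) →
      2 ≤ edH D x (y+1) + edV D (x+1) y + edDg D x y := by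
    intro x y hxy h
    rw [node11 x y] at h
    have h0 : gD D (x+1) (y+1) ≠ 0 := hnz (x+1) (y+1) (by omega)
    have h1 : gD D x (y+1) ≠ 0 := hnz x (y+1) (by omega)
    have h2 : gD D (x+1) y ≠ 0 := hnz (x+1) y (by omega)
    have hu : gD D (x+1) (y+1) = 1 ∨ gD D (x+1) (y+1) = -1 := by
      rcases hval' (x+1) (y+1) with h'|h'|h' <;> tauto
    have hv : gD D x (y+1) = 1 ∨ gD D x (y+1) = -1 := by
      rcases hval' x (y+1) with h'|h'|h' <;> tauto
    have hw : gD D (x+1) y = 1 ∨ gD D (x+1) y = -1 := by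
      rcases hval' (x+1) y with h'|h'|h' <;> tauto
    have hns : ¬ ((0 ≤ gD D (x+1) (y+1) ∧ 0 ≤ gD D x (y+1) ∧ 0 ≤ gD D (x+1) y) ∨
        (gD D (x+1) (y+1) ≤ 0 ∧ gD D x (y+1) ≤ 0 ∧ gD D (x+1) y ≤ 0)) := by
      intro hs; exact h ⟨hs, Or.inl h0⟩
    have := inner_core _ _ _ hu hv hw hns
    unfold edH edV edDg
    exact this

  -- counting
  have hN : (((Finset.range (m+1+1) ×ˢ Finset.range (m+1+1)).filter
      (fun ab => ab.1 + ab.2 ≤ m+1 ∧ IsNode D ab.1 ab.2)).card)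
      = ∑ a ∈ Finset.range (m+1+1), ∑ b ∈ Finset.range (m+1+1),
          (if a + b ≤ m + 1 ∧ IsNode D a b then (1:ℕ) else 0) := by
    rw [Finset.card_filter, Finset.sum_product]
  rw [hN]
  -- node-count + non-node-count = triangle count
  have hNW : (∑ a ∈ Finset.range (m+1+1), ∑ b ∈ Finset.range (m+1+1),
        (if a + b ≤ m + 1 ∧ IsNode D a b then (1:ℕ) else 0))
      + (∑ a ∈ Finset.range (m+1+1), ∑ b ∈ Finset.range (m+1+1),
        (if a + b ≤ m + 1 then (if IsNode D a b then (0:ℕ) else 1) else 0))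
      = ∑ a ∈ Finset.range (m+1+1), ∑ b ∈ Finset.range (m+1+1),
        (if a + b ≤ m + 1 then (1:ℕ) else 0) := by
    rw [← Finset.sum_add_distrib]
    refine Finset.sum_congr rfl fun a _ => ?_
    rw [← Finset.sum_add_distrib]
    refine Finset.sum_congr rfl fun b _ => ?_
    by_cases h1 : a + b ≤ m + 1 <;> by_cases h2 : IsNode D a b <;> simp [h1, h2]
  -- triangle count
  have hC : (∑ a ∈ Finset.range (m+1+1), ∑ b ∈ Finset.range (m+1+1),
        (if a + b ≤ m + 1 then (1:ℕ) else 0)) * 2 = (m+1+1) * (m+1+1+1) := by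
    rw [Finset.sum_congr rfl fun a (_ : a ∈ Finset.range (m+1+1)) =>
      Finset.sum_congr rfl fun b _ => (if_congr (by omega : (a + b ≤ m + 1) ↔ (a + b < m+1+1)) rfl rfl)]
    exact tri_count (m+1+1) (m+1+1) le_rfl
  -- decomposition of the non-node count W into boundary and inner parts
  have e1 : (∑ a ∈ Finset.range (m+1+1), ∑ b ∈ Finset.range (m+1+1),
        (if a + b ≤ m + 1 then (if IsNode D a b then (0:ℕ) else 1) else 0))
      = (∑ x ∈ Finset.range (m+1), ∑ b ∈ Finset.range (m+1+1),
          (if (x+1) + b ≤ m + 1 then (if IsNode D (x+1) b then (0:ℕ) else 1) else 0))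
      + (∑ b ∈ Finset.range (m+1+1),
          (if 0 + b ≤ m + 1 then (if IsNode D 0 b then (0:ℕ) else 1) else 0)) :=
    Finset.sum_range_succ' (fun a => ∑ b ∈ Finset.range (m+1+1),
      (if a + b ≤ m + 1 then (if IsNode D a b then (0:ℕ) else 1) else 0)) (m+1)
  have e2 : ∀ x : ℕ, (∑ b ∈ Finset.range (m+1+1),
        (if (x+1) + b ≤ m + 1 then (if IsNode D (x+1) b then (0:ℕ) else 1) else 0))
      = (∑ y ∈ Finset.range (m+1),
          (if (x+1) + (y+1) ≤ m + 1 then (if IsNode D (x+1) (y+1) then (0:ℕ) else 1) else 0))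
      + (if (x+1) + 0 ≤ m + 1 then (if IsNode D (x+1) 0 then (0:ℕ) else 1) else 0) :=
    fun x => Finset.sum_range_succ' _ (m+1)
  have e3 : (∑ b ∈ Finset.range (m+1+1),
        (if 0 + b ≤ m + 1 then (if IsNode D 0 b then (0:ℕ) else 1) else 0))
      = (∑ y ∈ Finset.range (m+1),
          (if 0 + (y+1) ≤ m + 1 then (if IsNode D 0 (y+1) then (0:ℕ) else 1) else 0))
      + (if 0 + 0 ≤ m + 1 then (if IsNode D 0 0 then (0:ℕ) else 1) else 0) :=
    Finset.sum_range_succ' _ (m+1)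
  have hWdec : (∑ a ∈ Finset.range (m+1+1), ∑ b ∈ Finset.range (m+1+1),
        (if a + b ≤ m + 1 then (if IsNode D a b then (0:ℕ) else 1) else 0))
      ≤ ((∑ x ∈ Finset.range (m+1), ∑ y ∈ Finset.range (m+1),
            (if x + y + 2 = m + 1 then (if IsNode D (x+1) (y+1) then (0:ℕ) else 1) else 0))
        + (∑ x ∈ Finset.range (m+1), ∑ y ∈ Finset.range (m+1),
            (if x + y + 3 ≤ m + 1 then (if IsNode D (x+1) (y+1) then (0:ℕ) else 1) else 0))
        + (∑ x ∈ Finset.range (m+1),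
            (if x + 2 ≤ m + 1 then (if IsNode D (x+1) 0 then (0:ℕ) else 1) else 0)))
      + (∑ y ∈ Finset.range (m+1),
            (if y + 2 ≤ m + 1 then (if IsNode D 0 (y+1) then (0:ℕ) else 1) else 0)) := by
    rw [e1, Finset.sum_congr rfl fun x (_ : x ∈ Finset.range (m+1)) => e2 x, e3,
      Finset.sum_add_distrib]
    refine add_le_add (add_le_add ?_ ?_) ?_
    · -- inner double sum ≤ Wt + Wi
      rw [← Finset.sum_add_distrib]
      refine Finset.sum_le_sum fun x _ => ?_
      rw [← Finset.sum_add_distrib]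
      refine Finset.sum_le_sum fun y _ => ?_
      by_cases hn : IsNode D (x+1) (y+1)
      · simp [hn]
      · simp only [hn, if_false]
        split_ifs <;> omega
    · -- bottom terms
      refine Finset.sum_le_sum fun x hx => ?_
      have hx' := Finset.mem_range.mp hx
      by_cases h : x + 2 ≤ m + 1
      · rw [if_pos (by omega : (x+1) + 0 ≤ m + 1), if_pos h]
      · have hxm : x = m := by omega
        have hnode : IsNode D (x+1) 0 := by rw [hxm]; exact cornerR
        rw [if_pos (show (x+1) + 0 ≤ m + 1 by omega), if_pos hnode]
        exact Nat.zero_le _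
    · -- left terms plus corner
      have c0 : (if (0:ℕ) + 0 ≤ m + 1 then (if IsNode D 0 0 then (0:ℕ) else 1) else 0) = 0 := by
        rw [if_pos (by omega), if_pos corner00]
      rw [c0, add_zero]
      refine Finset.sum_le_sum fun y hy => ?_
      have hy' := Finset.mem_range.mp hy
      by_cases h : y + 2 ≤ m + 1
      · rw [if_pos (by omega : 0 + (y+1) ≤ m + 1), if_pos h]
      · have hym : y = m := by omega
        have hnode : IsNode D 0 (y+1) := by rw [hym]; exact cornerT
        rw [if_pos (show 0 + (y+1) ≤ m + 1 by omega), if_pos hnode]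
        exact Nat.zero_le _
  -- boundary counts are at most m each
  have hWb : (∑ x ∈ Finset.range (m+1),
        (if x + 2 ≤ m + 1 then (if IsNode D (x+1) 0 then (0:ℕ) else 1) else 0)) ≤ m := by
    calc (∑ x ∈ Finset.range (m+1),
        (if x + 2 ≤ m + 1 then (if IsNode D (x+1) 0 then (0:ℕ) else 1) else 0))
        ≤ ∑ x ∈ Finset.range (m+1), (if x < m then (1:ℕ) else 0) := by
          refine Finset.sum_le_sum fun x _ => ?_
          by_cases h : x + 2 ≤ m + 1
          · rw [if_pos h, if_pos (show x < m by omega)]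
            split <;> omega
          · rw [if_neg h]; exact Nat.zero_le _
      _ = min m (m+1) := sum_ind_lt (m+1) m
      _ ≤ m := by omega
  have hWl : (∑ y ∈ Finset.range (m+1),
        (if y + 2 ≤ m + 1 then (if IsNode D 0 (y+1) then (0:ℕ) else 1) else 0)) ≤ m := by
    calc (∑ y ∈ Finset.range (m+1),
        (if y + 2 ≤ m + 1 then (if IsNode D 0 (y+1) then (0:ℕ) else 1) else 0))
        ≤ ∑ y ∈ Finset.range (m+1), (if y < m then (1:ℕ) else 0) := by
          refine Finset.sum_le_sum fun y _ => ?_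
          by_cases h : y + 2 ≤ m + 1
          · rw [if_pos h, if_pos (show y < m by omega)]
            split <;> omega
          · rw [if_neg h]; exact Nat.zero_le _
      _ = min m (m+1) := sum_ind_lt (m+1) m
      _ ≤ m := by omega
  have hWt : (∑ x ∈ Finset.range (m+1), ∑ y ∈ Finset.range (m+1),
        (if x + y + 2 = m + 1 then (if IsNode D (x+1) (y+1) then (0:ℕ) else 1) else 0)) ≤ m := by
    calc (∑ x ∈ Finset.range (m+1), ∑ y ∈ Finset.range (m+1),
        (if x + y + 2 = m + 1 then (if IsNode D (x+1) (y+1) then (0:ℕ) else 1) else 0))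
        ≤ ∑ x ∈ Finset.range (m+1), (if x < m then (1:ℕ) else 0) := by
          refine Finset.sum_le_sum fun x _ => ?_
          by_cases hx : x < m
          · calc (∑ y ∈ Finset.range (m+1),
                (if x + y + 2 = m + 1 then (if IsNode D (x+1) (y+1) then (0:ℕ) else 1) else 0))
                ≤ ∑ y ∈ Finset.range (m+1), (if y = m - 1 - x then (1:ℕ) else 0) := by
                  refine Finset.sum_le_sum fun y _ => ?_
                  by_cases h : x + y + 2 = m + 1
                  · rw [if_pos h, if_pos (by omega : y = m - 1 - x)]
                    split <;> omega
                  · rw [if_neg h]; exact Nat.zero_le _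
              _ = if m - 1 - x ∈ Finset.range (m+1) then (1:ℕ) else 0 := by
                  rw [Finset.sum_ite_eq' (Finset.range (m+1)) (m-1-x) (fun _ => (1:ℕ))]
              _ ≤ if x < m then (1:ℕ) else 0 := by
                  rw [if_pos (Finset.mem_range.mpr (by omega)), if_pos hx]
          · rw [if_neg hx]
            rw [Finset.sum_eq_zero fun y _ => if_neg (by omega)]
      _ = min m (m+1) := sum_ind_lt (m+1) m
      _ ≤ m := by omega
  -- decomposition of the three edge sums
  have hSH : (∑ x ∈ Finset.range (m+1), ∑ y ∈ Finset.range (m+1),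
        (if x + y + 2 ≤ m + 1 then edH D x y else 0))
      = (∑ x ∈ Finset.range (m+1), ∑ y ∈ Finset.range (m+1),
          (if x + (y+1) + 2 ≤ m + 1 then edH D x (y+1) else 0))
      + (∑ x ∈ Finset.range (m+1), (if x + 0 + 2 ≤ m + 1 then edH D x 0 else 0)) := by
    rw [← Finset.sum_add_distrib]
    refine Finset.sum_congr rfl fun x _ => ?_
    have eA : (∑ y ∈ Finset.range (m+1), (if x + y + 2 ≤ m + 1 then edH D x y else 0))
        = (∑ y ∈ Finset.range m, (if x + (y+1) + 2 ≤ m + 1 then edH D x (y+1) else 0))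
        + (if x + 0 + 2 ≤ m + 1 then edH D x 0 else 0) :=
      Finset.sum_range_succ' (fun y => if x + y + 2 ≤ m + 1 then edH D x y else 0) m
    have eB : (∑ y ∈ Finset.range (m+1), (if x + (y+1) + 2 ≤ m + 1 then edH D x (y+1) else 0))
        = (∑ y ∈ Finset.range m, (if x + (y+1) + 2 ≤ m + 1 then edH D x (y+1) else 0)) := by
      rw [Finset.sum_range_succ, if_neg (by omega), add_zero]
    rw [eA, eB]
  have hSV : (∑ x ∈ Finset.range (m+1), ∑ y ∈ Finset.range (m+1),
        (if x + y + 2 ≤ m + 1 then edV D x y else 0))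
      = (∑ x ∈ Finset.range (m+1), ∑ y ∈ Finset.range (m+1),
          (if (x+1) + y + 2 ≤ m + 1 then edV D (x+1) y else 0))
      + (∑ y ∈ Finset.range (m+1), (if 0 + y + 2 ≤ m + 1 then edV D 0 y else 0)) := by
    have base := Finset.sum_range_succ' (fun x => ∑ y ∈ Finset.range (m+1),
      (if x + y + 2 ≤ m + 1 then edV D x y else 0)) m
    have ext : (∑ x ∈ Finset.range (m+1), ∑ y ∈ Finset.range (m+1),
          (if (x+1) + y + 2 ≤ m + 1 then edV D (x+1) y else 0))
        = (∑ x ∈ Finset.range m, ∑ y ∈ Finset.range (m+1),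
          (if (x+1) + y + 2 ≤ m + 1 then edV D (x+1) y else 0)) := by
      rw [Finset.sum_range_succ, Finset.sum_eq_zero fun y _ => if_neg (by omega), add_zero]
    rw [base, ext]
  have hSD : (∑ x ∈ Finset.range (m+1), ∑ y ∈ Finset.range (m+1),
        (if x + y + 2 ≤ m + 1 then edDg D x y else 0))
      = (∑ x ∈ Finset.range (m+1), ∑ y ∈ Finset.range (m+1),
          (if x + y + 2 = m + 1 then edDg D x y else 0))
      + (∑ x ∈ Finset.range (m+1), ∑ y ∈ Finset.range (m+1),
          (if x + y + 3 ≤ m + 1 then edDg D x y else 0)) := by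
    rw [← Finset.sum_add_distrib]
    refine Finset.sum_congr rfl fun x _ => ?_
    rw [← Finset.sum_add_distrib]
    refine Finset.sum_congr rfl fun y _ => ?_
    by_cases h1 : x + y + 2 = m + 1
    · rw [if_pos (show x + y + 2 ≤ m + 1 by omega), if_pos h1,
        if_neg (show ¬ (x + y + 3 ≤ m + 1) by omega), add_zero]
    · by_cases h2 : x + y + 3 ≤ m + 1
      · rw [if_pos (show x + y + 2 ≤ m + 1 by omega), if_neg h1, if_pos h2, zero_add]
      · rw [if_neg (show ¬ (x + y + 2 ≤ m + 1) by omega), if_neg h1, if_neg h2]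
  -- charging: boundary non-nodes
  have hBH : (∑ x ∈ Finset.range (m+1),
        (if x + 2 ≤ m + 1 then (if IsNode D (x+1) 0 then (0:ℕ) else 1) else 0))
      ≤ ∑ x ∈ Finset.range (m+1), (if x + 0 + 2 ≤ m + 1 then edH D x 0 else 0) := by
    refine Finset.sum_le_sum fun x _ => ?_
    by_cases h : x + 2 ≤ m + 1
    · rw [if_pos h, if_pos (by omega : x + 0 + 2 ≤ m + 1)]
      by_cases hn : IsNode D (x+1) 0
      · rw [if_pos hn]; exact Nat.zero_le _
      · rw [if_neg hn, nodeBottom x h hn]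
    · rw [if_neg h]; exact Nat.zero_le _
  have hBV : (∑ y ∈ Finset.range (m+1),
        (if y + 2 ≤ m + 1 then (if IsNode D 0 (y+1) then (0:ℕ) else 1) else 0))
      ≤ ∑ y ∈ Finset.range (m+1), (if 0 + y + 2 ≤ m + 1 then edV D 0 y else 0) := by
    refine Finset.sum_le_sum fun y _ => ?_
    by_cases h : y + 2 ≤ m + 1
    · rw [if_pos h, if_pos (by omega : 0 + y + 2 ≤ m + 1)]
      by_cases hn : IsNode D 0 (y+1)
      · rw [if_pos hn]; exact Nat.zero_le _
      · rw [if_neg hn, nodeLeft y h hn]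
    · rw [if_neg h]; exact Nat.zero_le _
  have hBT : (∑ x ∈ Finset.range (m+1), ∑ y ∈ Finset.range (m+1),
        (if x + y + 2 = m + 1 then (if IsNode D (x+1) (y+1) then (0:ℕ) else 1) else 0))
      ≤ ∑ x ∈ Finset.range (m+1), ∑ y ∈ Finset.range (m+1),
        (if x + y + 2 = m + 1 then edDg D x y else 0) := by
    refine Finset.sum_le_sum fun x _ => Finset.sum_le_sum fun y _ => ?_
    by_cases h : x + y + 2 = m + 1
    · rw [if_pos h, if_pos h]
      by_cases hn : IsNode D (x+1) (y+1)
      · rw [if_pos hn]; exact Nat.zero_le _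
      · rw [if_neg hn, nodeTop x y h hn]
    · rw [if_neg h, if_neg h]
  -- charging: inner non-nodes use two mixed edges
  have hBI : 2 * (∑ x ∈ Finset.range (m+1), ∑ y ∈ Finset.range (m+1),
        (if x + y + 3 ≤ m + 1 then (if IsNode D (x+1) (y+1) then (0:ℕ) else 1) else 0))
      ≤ (∑ x ∈ Finset.range (m+1), ∑ y ∈ Finset.range (m+1),
          (if x + (y+1) + 2 ≤ m + 1 then edH D x (y+1) else 0))
      + (∑ x ∈ Finset.range (m+1), ∑ y ∈ Finset.range (m+1),
          (if (x+1) + y + 2 ≤ m + 1 then edV D (x+1) y else 0))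
      + (∑ x ∈ Finset.range (m+1), ∑ y ∈ Finset.range (m+1),
          (if x + y + 3 ≤ m + 1 then edDg D x y else 0)) := by
    rw [Finset.mul_sum, ← Finset.sum_add_distrib, ← Finset.sum_add_distrib]
    refine Finset.sum_le_sum fun x _ => ?_
    rw [Finset.mul_sum, ← Finset.sum_add_distrib, ← Finset.sum_add_distrib]
    refine Finset.sum_le_sum fun y _ => ?_
    by_cases h : x + y + 3 ≤ m + 1
    · rw [if_pos h, if_pos (by omega : x + (y+1) + 2 ≤ m + 1),
        if_pos (by omega : (x+1) + y + 2 ≤ m + 1), if_pos h]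
      by_cases hn : IsNode D (x+1) (y+1)
      · rw [if_pos hn]; simp
      · rw [if_neg hn]
        have := nodeInner x y h hn
        omega
    · rw [if_neg h, if_neg (show ¬ (x + (y+1) + 2 ≤ m + 1) by omega),
        if_neg (show ¬ ((x+1) + y + 2 ≤ m + 1) by omega), if_neg h]
      omega
  -- each lower triangle has at most two mixed edges
  have hEdge : (∑ x ∈ Finset.range (m+1), ∑ y ∈ Finset.range (m+1),
        (if x + y + 2 ≤ m + 1 then edH D x y else 0))
      + (∑ x ∈ Finset.range (m+1), ∑ y ∈ Finset.range (m+1),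
          (if x + y + 2 ≤ m + 1 then edV D x y else 0))
      + (∑ x ∈ Finset.range (m+1), ∑ y ∈ Finset.range (m+1),
          (if x + y + 2 ≤ m + 1 then edDg D x y else 0))
      ≤ 2 * (∑ x ∈ Finset.range (m+1), ∑ y ∈ Finset.range (m+1),
          (if x + y + 2 ≤ m + 1 then (1:ℕ) else 0)) := by
    rw [Finset.mul_sum, ← Finset.sum_add_distrib, ← Finset.sum_add_distrib]
    refine Finset.sum_le_sum fun x _ => ?_
    rw [Finset.mul_sum, ← Finset.sum_add_distrib, ← Finset.sum_add_distrib]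
    refine Finset.sum_le_sum fun y _ => ?_
    by_cases h : x + y + 2 ≤ m + 1
    · rw [if_pos h, if_pos h, if_pos h, if_pos h]
      have := tri_core (gD D x y) (gD D (x+1) y) (gD D x (y+1))
        (hval' x y) (hval' (x+1) y) (hval' x (y+1))
      unfold edH edV edDg
      omega
    · rw [if_neg h, if_neg h, if_neg h, if_neg h]
      omega
  have hT2 : (∑ x ∈ Finset.range (m+1), ∑ y ∈ Finset.range (m+1),
        (if x + y + 2 ≤ m + 1 then (1:ℕ) else 0)) * 2 = m * (m + 1) := by
    rw [Finset.sum_congr rfl fun x (_ : x ∈ Finset.range (m+1)) =>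
      Finset.sum_congr rfl fun y _ => (if_congr (by omega : (x + y + 2 ≤ m + 1) ↔ (x + y < m)) rfl rfl)]
    exact tri_count (m+1) m (by omega)
  -- final linear assembly
  have hprod : (m+1+1) * (m+1+1+1) = m * (m+1) + 4*m + 6 := by ring
  linarith [hNW, hC, hWdec, hWb, hWl, hWt, hBH, hBV, hBT, hBI, hSH, hSV, hSD, hEdge, hT2, hprod]
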